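/- The infinite dihedral group D∞ = ℤ ⋊ ℤ/2 (with ℤ/2 acting by negation) is bounded, even though it contains the unbounded infinite cyclic subgroup ℤ of index 2. In particular, for any conjugation-invariant norm ν on D∞, ν restricted to the translation subgroup ℤ is bounded (since every translation is a product of two reflections, whose conjugacy classes are finite in number up to the norm values of two fixed reflections). -/
import Mathlib


/-- A conjugation-invariant norm on a group `G`. -/
structure ConjInvNorm (G : Type*) [Group G] where
  ν : G → ℝ
  nonneg : ∀ g, 0 ≤ ν g
  eq_zero_iff : ∀ g, ν g = 0 ↔ g = 1
  inv_eq : ∀ g, ν g⁻¹ = ν g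
  subadd : ∀ g h, ν (g * h) ≤ ν g + ν h
  conj_inv : ∀ g h, ν (h⁻¹ * g * h) = ν g

/-- A group is bounded if every conjugation-invariant norm on it has finite diameter. -/
def IsBoundedGroup (G : Type*) [Group G] : Prop :=
  ∀ ν : ConjInvNorm G, ∃ C : ℝ, ∀ g, ν.ν g ≤ C

/-- The infinite dihedral group (ℤ ⋊ ℤ/2, realized as `DihedralGroup 0`) is bounded. -/
theorem infinite_dihedral_bounded : IsBoundedGroup (DihedralGroup 0) := by
  intro ν
  set A := ν.ν (DihedralGroup.sr 0) with hA
  set B := ν.ν (DihedralGroup.sr 1) with hB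
  have hconj : ∀ i j : ZMod 0,
      ν.ν (DihedralGroup.sr (i + 2 * j)) = ν.ν (DihedralGroup.sr i) := by
    intro i j
    have h := ν.conj_inv (DihedralGroup.sr i) (DihedralGroup.r j)
    have hinv : (DihedralGroup.r j)⁻¹ = DihedralGroup.r (-j) := rfl
    rw [hinv] at h
    simp only [DihedralGroup.r_mul_sr, DihedralGroup.sr_mul_r] at h
    rw [← h]
    ring_nf
  have hsr : ∀ i : ZMod 0, ν.ν (DihedralGroup.sr i) ≤ A + B := by
    intro i
    have hp : ∃ j : ZMod 0, i = 0 + 2 * j ∨ i = 1 + 2 * j := by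
      refine ⟨(show ℤ from i) / 2, ?_⟩
      show (show ℤ from i) = 0 + 2 * ((show ℤ from i) / 2) ∨
        (show ℤ from i) = 1 + 2 * ((show ℤ from i) / 2)
      omega
    obtain ⟨j, hj | hj⟩ := hp <;> rw [hj, hconj]
    · exact le_add_of_nonneg_right (ν.nonneg _)
    · exact le_add_of_nonneg_left (ν.nonneg _)
  refine ⟨2 * (A + B), ?_⟩
  intro g
  have hAB : (0:ℝ) ≤ A + B :=
    add_nonneg (ν.nonneg _) (ν.nonneg _)
  rcases g with i | i
  · have hr : (DihedralGroup.r i : DihedralGroup 0)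
        = DihedralGroup.sr 0 * DihedralGroup.sr i := by
      rw [DihedralGroup.sr_mul_sr]; ring_nf
    rw [hr]
    calc ν.ν (DihedralGroup.sr 0 * DihedralGroup.sr i)
        ≤ ν.ν (DihedralGroup.sr 0) + ν.ν (DihedralGroup.sr i) := ν.subadd _ _
      _ ≤ (A + B) + (A + B) := add_le_add (hsr 0) (hsr i)
      _ = 2 * (A + B) := by ring
  · calc ν.ν (DihedralGroup.sr i) ≤ A + B := hsr i
      _ ≤ 2 * (A + B) := by linarith
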